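/- In a two-stripe circulant TSP instance on n vertices with gcd(n, a₁, a₂) = 1 and g₁ = gcd(n, a₁) > 1, there exists a Hamiltonian cycle using exactly 2(g₁ − 1) edges of length a₂. -/

import Mathlib

namespace TSPaux
open SimpleGraph List

variable {V : Type*} {G : SimpleGraph V}
variable {α : Type*}



/-- Build a walk from a chain of adjacent vertices. -/
def buildWalk (G : SimpleGraph V) : (x : V) → (l : List V) → (y : V) →
    List.Chain G.Adj x (l ++ [y]) → G.Walk x y
  | _, [], _, h => Walk.cons (List.rel_of_chain_cons h) Walk.nil
  | x, a :: l, y, h =>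
    Walk.cons (List.rel_of_chain_cons h) (buildWalk G a l y (List.chain_of_chain_cons h))

@[simp] lemma buildWalk_support (x : V) (l : List V) (y : V) (h) :
    (buildWalk G x l y h).support = x :: (l ++ [y]) := by
  induction l generalizing x with
  | nil => simp [buildWalk]
  | cons a l ih => simp [buildWalk, ih]; exact ih a _

lemma buildWalk_darts (x : V) (l : List V) (y : V) (h) :
    (buildWalk G x l y h).darts.map SimpleGraph.Dart.toProd
      = (x :: l).zip (l ++ [y]) := by
  induction l generalizing x with
  | nil => simp [buildWalk]
  | cons a l ih => simp [buildWalk, ih]; exact ih a _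

lemma buildWalk_length (x : V) (l : List V) (y : V) (h) :
    (buildWalk G x l y h).length = l.length + 1 := by
  induction l generalizing x with
  | nil => simp [buildWalk]
  | cons a l ih => simp [buildWalk, ih]; exact ih a _

lemma edge_last_not_mem {u v : V} (p : G.Walk u v) (hnd : p.support.Nodup)
    (hlen : 1 < p.length) : s(v, u) ∉ p.edges := by
  induction p with
  | nil => simp
  | @cons u w v hadj q ih =>
    simp only [Walk.edges_cons, List.mem_cons]
    rintro (heq | hmem)
    · rw [Sym2.eq_iff] at heq
      rcases heq with ⟨h1, h2⟩ | ⟨h1, _⟩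
      · subst h1; subst h2; exact G.irrefl hadj
      · subst h1
        -- q : Walk v v with nodup support
        have hnd' : q.support.Nodup := by
          simpa [Walk.support_cons] using hnd.of_cons
        have : q.length = 0 := by
          by_contra hq0
          have hvmem : v ∈ q.support.tail := by
            have := q.end_mem_support
            rcases q with _ | ⟨h, q'⟩
            · exact absurd rfl hq0
            · simpa [Walk.support_cons] using q'.end_mem_support
          rcases q.support_eq_cons with hsup
          rw [hsup] at hnd'
          exact (List.nodup_cons.mp hnd').1 hvmem
        simp [Walk.length_cons, this] at hlen
    · have : u ∈ q.support := q.snd_mem_support_of_mem_edges hmem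
      have : u ∉ q.support := by
        have := hnd
        simp only [Walk.support_cons, List.nodup_cons] at this
        exact this.1
      exact this ‹u ∈ q.support›





/-- The list of consecutive pairs of a list. -/
def steps (l : List α) : List (α × α) := l.zip l.tail

@[simp] lemma steps_nil : steps ([] : List α) = [] := rfl
@[simp] lemma steps_single (a : α) : steps [a] = [] := rfl
lemma steps_cons_cons (a b : α) (t : List α) :
    steps (a :: b :: t) = (a, b) :: steps (b :: t) := rfl

lemma steps_cons (a : α) {l : List α} {v : α} (h : l.head? = some v) :
    steps (a :: l) = (a, v) :: steps l := by
  cases l with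
  | nil => simp at h
  | cons b t => simp only [List.head?_cons, Option.some.injEq] at h; subst h; rfl

lemma countP_steps_append (P : α × α → Bool) (l₁ l₂ : List α) {u v : α}
    (h₁ : l₁.getLast? = some u) (h₂ : l₂.head? = some v) :
    (steps (l₁ ++ l₂)).countP P
      = (steps l₁).countP P + (steps l₂).countP P + (if P (u, v) then 1 else 0) := by
  induction l₁ with
  | nil => simp at h₁
  | cons a t ih =>
    cases t with
    | nil =>
      have ha : a = u := by simpa using h₁
      rw [List.singleton_append, steps_cons a h₂, ha]
      simp [List.countP_cons]
    | cons b t' =>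
      have h₁' : (b :: t').getLast? = some u := by
        rw [← h₁]; simp [List.getLast?_cons_cons]
      simp only [List.cons_append]
      rw [steps_cons_cons, steps_cons_cons, List.countP_cons, List.countP_cons,
        ← List.cons_append, ih h₁']
      omega

lemma countP_steps_reverse (P Q : α × α → Bool) (hPQ : ∀ a b, P (a, b) = Q (b, a))
    (l : List α) : (steps l.reverse).countP P = (steps l).countP Q := by
  induction l with
  | nil => simp
  | cons a t ih =>
    cases t with
    | nil => simp
    | cons b t' =>
      rw [List.reverse_cons]
      rw [countP_steps_append P (b :: t').reverse [a]
        (by rw [List.getLast?_reverse]; rfl) rfl]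
      rw [steps_cons_cons, List.countP_cons, ih]
      simp [hPQ b a]

lemma countP_steps_eq_zero {P : α × α → Bool} {l : List α}
    (h : l.Chain' (fun a b => ¬ P (a, b) = true)) : (steps l).countP P = 0 := by
  induction l with
  | nil => rfl
  | cons a t ih =>
    cases t with
    | nil => rfl
    | cons b t' =>
      rw [List.Chain', List.isChain_cons_cons] at h
      rw [steps_cons_cons, List.countP_cons]
      simp [ih h.2, h.1]

lemma chain'_map_range {R : α → α → Prop} (f : ℕ → α) (k : ℕ)
    (h : ∀ i, i + 1 < k → R (f i) (f (i + 1))) :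
    List.Chain' R ((List.range k).map f) := by
  rw [List.Chain', List.isChain_map]
  cases k with
  | zero => simp
  | succ k' =>
    rw [List.isChain_range_succ]
    intro m hm
    exact h m (by omega)

lemma head?_map_range (f : ℕ → α) (k : ℕ) (hk : 0 < k) :
    ((List.range k).map f).head? = some (f 0) := by
  cases k with
  | zero => omega
  | succ k' => rw [List.range_succ_eq_map]; simp

lemma getLast?_map_range (f : ℕ → α) (k : ℕ) (hk : 0 < k) :
    ((List.range k).map f).getLast? = some (f (k - 1)) := by
  cases k with
  | zero => omega
  | succ k' =>
    rw [List.range_succ, List.map_append]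
    simp


lemma zip_tail_concat : ∀ (l : List α) (y : α) (h : l ≠ []),
    l.zip (l.tail ++ [y]) = steps l ++ [(l.getLast h, y)]
  | [], y, h => absurd rfl h
  | [a], y, _ => rfl
  | a :: b :: t, y, h => by
    have ih := zip_tail_concat (b :: t) y (by simp)
    simp only [List.tail_cons] at ih ⊢
    rw [List.cons_append, List.zip_cons_cons, ih, steps_cons_cons]
    simp [List.getLast_cons]

/-- From a nodup list of adjacent vertices covering all of `V`, with ends adjacent,
get a Hamiltonian cycle whose dart list is the cyclic zip. -/
lemma ham_of_list [DecidableEq V] [Fintype V] (x a : V) (t : List V)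
    (hnd : (x :: a :: t).Nodup) (hcard : (x :: a :: t).length = Fintype.card V)
    (ht : t ≠ []) (hchain : List.Chain G.Adj x ((a :: t) ++ [x])) :
    ∃ w : G.Walk x x, w.IsHamiltonianCycle ∧
      w.darts.map SimpleGraph.Dart.toProd = (x :: a :: t).zip ((a :: t) ++ [x]) := by
  have hch2 : List.Chain G.Adj a (t ++ [x]) := List.chain_of_chain_cons hchain
  refine ⟨Walk.cons (List.rel_of_chain_cons hchain) (buildWalk G a t x hch2), ?_, ?_⟩
  · have hnd_inner : (buildWalk G a t x hch2).support.Nodup := by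
      rw [buildWalk_support]
      have hx : x ∉ a :: t := (List.nodup_cons.mp hnd).1
      have : (a :: t).Nodup := (List.nodup_cons.mp hnd).2
      rw [show a :: (t ++ [x]) = (a :: t) ++ [x] by simp]
      rw [List.nodup_append]
      exact ⟨this, List.nodup_singleton x, fun b hb c hc => by rw [List.mem_singleton] at hc; subst hc; exact fun h => hx (h ▸ hb)⟩
    rw [Walk.isHamiltonianCycle_iff_isCycle_and_support_count_tail_eq_one]
    constructor
    · rw [Walk.cons_isCycle_iff]
      refine ⟨Walk.IsPath.mk' hnd_inner, ?_⟩
      apply edge_last_not_mem _ hnd_inner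
      rw [buildWalk_length]
      have : t.length ≠ 0 := fun h => ht (List.eq_nil_of_length_eq_zero h)
      omega
    · intro v
      have hsupp : (Walk.cons (List.rel_of_chain_cons hchain)
          (buildWalk G a t x hch2)).support = x :: a :: (t ++ [x]) := by
        simp [Walk.support_cons, buildWalk_support]
      rw [hsupp]
      simp only [List.tail_cons]
      have hmem : v ∈ x :: a :: t := by
        have h1 : (x :: a :: t).toFinset = Finset.univ := by
          apply Finset.eq_univ_of_card
          rw [List.toFinset_card_of_nodup hnd, hcard]
        rw [← List.mem_toFinset, h1]
        exact Finset.mem_univ v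
      have hmem' : v ∈ (a :: t) ++ [x] := by
        rcases List.mem_cons.mp hmem with h | h
        · simp [h]
        · rcases List.mem_cons.mp h with h' | h'
          · simp [h']
          · simp [h']
      have hnd' : ((a :: t) ++ [x]).Nodup := by
        have hx : x ∉ a :: t := (List.nodup_cons.mp hnd).1
        rw [List.nodup_append]
        exact ⟨(List.nodup_cons.mp hnd).2, List.nodup_singleton x,
          fun b hb c hc => by rw [List.mem_singleton] at hc; subst hc; exact fun h => hx (h ▸ hb)⟩
      rw [show a :: (t ++ [x]) = (a :: t) ++ [x] by simp]
      exact List.count_eq_one_of_mem hnd' hmem'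
  · simp [Walk.darts_cons, buildWalk_darts]


/-- `mod`-shifted values are injective below the modulus. -/
lemma mod_shift_inj {m : ℕ} (c : ℕ) {i i' : ℕ} (hi : i < m) (hi' : i' < m)
    (h : (c + i) % m = (c + i') % m) : i = i' := by
  have h1 : (c + i) % m = (c + i') % m → i % m = i' % m := by
    intro hh
    have : (c + i) ≡ (c + i') [MOD m] := hh
    have := Nat.ModEq.add_left_cancel' c this
    exact this
  have := h1 h
  rwa [Nat.mod_eq_of_lt hi, Nat.mod_eq_of_lt hi'] at this

/-- The index list of the tour: entries are (row, column mod m). -/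
def LL (m : ℕ) : ℕ → List (ℕ × ℕ)
  | 0 => (List.range m).map (fun i => (0, (i + 1) % m))
  | j + 1 => ((List.range (m - 1)).map (fun i => (j + 1, (j + 2 + i) % m)))
      ++ (LL m j).reverse ++ [(j + 1, (j + 1) % m)]


lemma LL_length (hm : 2 ≤ m) (j : ℕ) : (LL m j).length = (j + 1) * m := by
  induction j with
  | zero => simp [LL]
  | succ j ih =>
    simp [LL, ih]
    ring_nf
    omega

lemma LL_ne_nil (hm : 2 ≤ m) (j : ℕ) : LL m j ≠ [] := by
  intro h
  have := LL_length hm j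
  rw [h] at this
  simp at this
  omega

lemma LL_head? (hm : 2 ≤ m) (j : ℕ) : (LL m j).head? = some (j, (j + 1) % m) := by
  cases j with
  | zero =>
    show ((List.range m).map (fun i => ((0 : ℕ), (i + 1) % m))).head? = _
    rw [head?_map_range _ m (by omega)]
  | succ j =>
    show ((((List.range (m - 1)).map (fun i => (j + 1, (j + 2 + i) % m)))
      ++ (LL m j).reverse ++ [(j + 1, (j + 1) % m)]).head?) = _
    rw [List.append_assoc, List.head?_append, head?_map_range _ (m - 1) (by omega)]
    norm_num [Option.or]

lemma LL_getLast? (hm : 2 ≤ m) (j : ℕ) : (LL m j).getLast? = some (j, j % m) := by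
  cases j with
  | zero =>
    show ((List.range m).map (fun i => ((0 : ℕ), (i + 1) % m))).getLast? = _
    rw [getLast?_map_range _ m (by omega)]
    have h1 : m - 1 + 1 = m := by omega
    rw [h1, Nat.mod_self, Nat.zero_mod]
  | succ j =>
    show ((((List.range (m - 1)).map (fun i => (j + 1, (j + 2 + i) % m)))
      ++ (LL m j).reverse ++ [(j + 1, (j + 1) % m)]).getLast?) = _
    simp

lemma LL_bounds (hm : 2 ≤ m) (j : ℕ) : ∀ p ∈ LL m j, p.1 ≤ j ∧ p.2 < m := by
  induction j with
  | zero =>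
    intro p hp
    simp only [LL, List.mem_map, List.mem_range] at hp
    obtain ⟨i, _, rfl⟩ := hp
    exact ⟨le_refl 0, Nat.mod_lt _ (by omega)⟩
  | succ j ih =>
    intro p hp
    simp only [LL, List.mem_append, List.mem_reverse, List.mem_map, List.mem_range,
      List.mem_singleton] at hp
    rcases hp with (⟨i, _, rfl⟩ | h) | rfl
    · exact ⟨le_refl _, Nat.mod_lt _ (by omega)⟩
    · obtain ⟨h1, h2⟩ := ih p h
      exact ⟨by omega, h2⟩
    · exact ⟨le_refl _, Nat.mod_lt _ (by omega)⟩

lemma LL_nodup (hm : 2 ≤ m) (j : ℕ) : (LL m j).Nodup := by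
  induction j with
  | zero =>
    apply List.Nodup.map_on _ List.nodup_range
    intro x hx y hy hxy
    simp only [List.mem_range] at hx hy
    simp only [Prod.mk.injEq, true_and] at hxy
    exact mod_shift_inj 1 hx hy (by simpa [Nat.add_comm] using hxy)
  | succ j ih =>
    show (((List.range (m - 1)).map (fun i => (j + 1, (j + 2 + i) % m)))
      ++ (LL m j).reverse ++ [(j + 1, (j + 1) % m)]).Nodup
    rw [List.nodup_append, List.nodup_append]
    refine ⟨⟨?_, List.nodup_reverse.mpr ih, ?_⟩, List.nodup_singleton _, ?_⟩
    · apply List.Nodup.map_on _ List.nodup_range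
      intro x hx y hy hxy
      simp only [List.mem_range] at hx hy
      simp only [Prod.mk.injEq, true_and] at hxy
      exact mod_shift_inj (j + 2) (by omega) (by omega) hxy
    · -- Disjoint A rev
      intro p hpA q hpR hpq
      subst hpq
      simp only [List.mem_map, List.mem_range] at hpA
      obtain ⟨i, _, rfl⟩ := hpA
      rw [List.mem_reverse] at hpR
      have := (LL_bounds hm j _ hpR).1
      simp at this
    · -- c not in A ++ rev
      intro p hp q hp2 hpq
      simp only [List.mem_singleton] at hp2
      subst hp2
      subst hpq
      rw [List.mem_append] at hp
      rcases hp with h | h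
      · simp only [List.mem_map, List.mem_range] at h
        obtain ⟨i, hi, hieq⟩ := h
        simp only [Prod.mk.injEq, true_and] at hieq
        have : (j + 1 + (i + 1)) % m = (j + 1 + 0) % m := by
          rw [Nat.add_zero]
          rw [← hieq]
          congr 1
          omega
        have := mod_shift_inj (j + 1) (by omega) (by omega) this
        omega
      · rw [List.mem_reverse] at h
        have := (LL_bounds hm j _ h).1
        simp at this

/-- The vertex map. -/
def phi (n a₁ a₂ : ℕ) (p : ℕ × ℕ) : ZMod n := ((p.1 * a₂ + p.2 * a₁ : ℕ) : ZMod n)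


lemma phi_step1 (j i : ℕ) :
    phi n a₁ a₂ (j, i + 1) = phi n a₁ a₂ (j, i) + (a₁ : ZMod n) := by
  simp only [phi]
  push_cast
  ring

lemma phi_step2 (j i : ℕ) :
    phi n a₁ a₂ (j + 1, i) = phi n a₁ a₂ (j, i) + (a₂ : ZMod n) := by
  simp only [phi]
  push_cast
  ring

lemma phi_mod (hdvd : n ∣ m * a₁) (j i : ℕ) :
    phi n a₁ a₂ (j, i % m) = phi n a₁ a₂ (j, i) := by
  have hi : j * a₂ + i * a₁ = (j * a₂ + (i % m) * a₁) + (m * a₁) * (i / m) := by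
    conv_lhs => rw [← Nat.div_add_mod i m]
    ring
  show ((j * a₂ + (i % m) * a₁ : ℕ) : ZMod n) = ((j * a₂ + i * a₁ : ℕ) : ZMod n)
  rw [hi]
  have h0 : ((m * a₁ * (i / m) : ℕ) : ZMod n) = 0 := by
    rw [ZMod.natCast_eq_zero_iff]
    exact Dvd.dvd.mul_right hdvd _
  conv_rhs => rw [Nat.cast_add]
  rw [h0, add_zero]

lemma phi_inj (hn : 0 < n) (ha₁ : 0 < a₁)
    (hg : Nat.gcd (Nat.gcd n a₁) a₂ = 1)
    {j i j' i' : ℕ} (hj : j < n.gcd a₁) (hj' : j' < n.gcd a₁)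
    (hi : i < n / n.gcd a₁) (hi' : i' < n / n.gcd a₁)
    (h : phi n a₁ a₂ (j, i) = phi n a₁ a₂ (j', i')) : j = j' ∧ i = i' := by
  set g := n.gcd a₁ with hgdef
  have hgpos : 0 < g := Nat.gcd_pos_of_pos_left _ hn
  have hgn : g ∣ n := Nat.gcd_dvd_left n a₁
  have hga : g ∣ a₁ := Nat.gcd_dvd_right n a₁
  -- to integers
  have hmod : (j * a₂ + i * a₁) ≡ (j' * a₂ + i' * a₁) [MOD n] := by
    rw [← ZMod.natCast_eq_natCast_iff]
    exact h
  have hdvd : (n : ℤ) ∣ ((j' : ℤ) * a₂ + i' * a₁) - ((j : ℤ) * a₂ + (i : ℤ) * a₁) := by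
    have := hmod.dvd
    push_cast at this
    convert this using 1
  -- first coordinate
  have h1 : (g : ℤ) ∣ ((j' : ℤ) - j) * a₂ := by
    obtain ⟨b, hb⟩ := hga
    have h2 : (g : ℤ) ∣ ((j' : ℤ) * a₂ + i' * a₁) - ((j : ℤ) * a₂ + (i : ℤ) * a₁) :=
      dvd_trans (Int.natCast_dvd_natCast.mpr hgn) hdvd
    have hbz : (a₁ : ℤ) = (g : ℤ) * b := by exact_mod_cast hb
    have heq : ((j' : ℤ) - j) * a₂
        = (((j' : ℤ) * a₂ + i' * a₁) - ((j : ℤ) * a₂ + (i : ℤ) * a₁))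
          - (g : ℤ) * (((i' : ℤ) - i) * b) := by
      rw [hbz]; ring
    rw [heq]
    exact dvd_sub h2 (Dvd.intro _ rfl)
  have hco : IsCoprime (g : ℤ) (a₂ : ℤ) := by
    rw [Int.isCoprime_iff_gcd_eq_one, Int.gcd_natCast_natCast]
    exact hg
  have hjj : (g : ℤ) ∣ (j' : ℤ) - j := hco.dvd_of_dvd_mul_right h1
  have hjeq : j = j' := by
    obtain ⟨k, hk⟩ := hjj
    have hgz : (0 : ℤ) < (g : ℤ) := by exact_mod_cast hgpos
    have hb1 : (j : ℤ) < (g : ℤ) := by exact_mod_cast hj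
    have hb2 : (j' : ℤ) < (g : ℤ) := by exact_mod_cast hj'
    have hk1 : (g : ℤ) * k < (g : ℤ) * 1 := by rw [mul_one, ← hk]; omega
    have hk2 : (g : ℤ) * (-1) < (g : ℤ) * k := by rw [← hk, mul_neg_one]; omega
    have k1 : k < 1 := lt_of_mul_lt_mul_left hk1 (le_of_lt hgz)
    have k2 : -1 < k := lt_of_mul_lt_mul_left hk2 (le_of_lt hgz)
    have : k = 0 := by omega
    rw [this, mul_zero] at hk
    omega
  refine ⟨hjeq, ?_⟩
  subst hjeq
  -- second coordinate
  have h4 : (n : ℤ) ∣ ((i' : ℤ) - i) * a₁ := by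
    have heq : ((i' : ℤ) - i) * a₁
        = (((j : ℤ) * a₂ + i' * a₁) - ((j : ℤ) * a₂ + (i : ℤ) * a₁)) := by ring
    rw [heq]
    exact hdvd
  have hab : a₁ = g * (a₁ / g) := (Nat.mul_div_cancel' hga).symm
  have hnm : n = g * (n / g) := (Nat.mul_div_cancel' hgn).symm
  have hcop : Nat.Coprime (n / g) (a₁ / g) := Nat.coprime_div_gcd_div_gcd hgpos
  have h5 : ((n / g : ℕ) : ℤ) ∣ ((i' : ℤ) - i) * ((a₁ / g : ℕ) : ℤ) := by
    have hgz : ((g : ℕ) : ℤ) ≠ 0 := by exact_mod_cast hgpos.ne'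
    apply (mul_dvd_mul_iff_left hgz).mp
    have e1 : ((g : ℕ) : ℤ) * (((i' : ℤ) - i) * ((a₁ / g : ℕ) : ℤ))
        = ((i' : ℤ) - i) * a₁ := by
      rw [show ((a₁ : ℕ) : ℤ) = ((g : ℕ) : ℤ) * ((a₁ / g : ℕ) : ℤ) by exact_mod_cast hab]
      ring
    rw [e1]
    have e2 : ((n : ℕ) : ℤ) = ((g : ℕ) : ℤ) * ((n / g : ℕ) : ℤ) := by exact_mod_cast hnm
    rw [← e2]
    exact h4
  have hco2 : IsCoprime ((n / g : ℕ) : ℤ) ((a₁ / g : ℕ) : ℤ) := hcop.isCoprime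
  have h6 : ((n / g : ℕ) : ℤ) ∣ (i' : ℤ) - i := hco2.dvd_of_dvd_mul_right h5
  obtain ⟨k, hk⟩ := h6
  have hmpos : 0 < n / g := by
    rcases Nat.eq_zero_or_pos (n / g) with h | h
    · rw [h] at hi; omega
    · exact h
  have hgz : (0 : ℤ) < ((n / g : ℕ) : ℤ) := by exact_mod_cast hmpos
  have hb1 : (i : ℤ) < ((n / g : ℕ) : ℤ) := by exact_mod_cast hi
  have hb2 : (i' : ℤ) < ((n / g : ℕ) : ℤ) := by exact_mod_cast hi'
  have hk1 : ((n / g : ℕ) : ℤ) * k < ((n / g : ℕ) : ℤ) * 1 := by rw [mul_one, ← hk]; omega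
  have hk2 : ((n / g : ℕ) : ℤ) * (-1) < ((n / g : ℕ) : ℤ) * k := by
    rw [← hk, mul_neg_one]; omega
  have k1 : k < 1 := lt_of_mul_lt_mul_left hk1 (le_of_lt hgz)
  have k2 : -1 < k := lt_of_mul_lt_mul_left hk2 (le_of_lt hgz)
  have : k = 0 := by omega
  rw [this, mul_zero] at hk
  omega



end TSPaux

open SimpleGraph List TSPaux in
/-- Upper bound tour for two-stripe circulant TSP: if `gcd(n,a₁,a₂) = 1` and
`g₁ = gcd(n,a₁) > 1`, then `C⟨{a₁,a₂}⟩` has a Hamiltonian cycle using exactly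
`2(g₁ − 1)` edges of length `a₂`. -/
theorem stmt_4 (n a₁ a₂ : ℕ) (hn : 0 < n)
    (ha₁ : 1 ≤ a₁) (ha₂ : 1 ≤ a₂) (hne : a₁ ≠ a₂)
    (hb₁ : 2 * a₁ ≤ n) (hb₂ : 2 * a₂ ≤ n)
    (hg : Nat.gcd (Nat.gcd n a₁) a₂ = 1) (hg₁ : 1 < Nat.gcd n a₁) :
    ∃ (v : ZMod n) (w : (SimpleGraph.circulantGraph
        ({(a₁ : ZMod n), (a₂ : ZMod n)} : Set (ZMod n))).Walk v v),
      w.IsHamiltonianCycle ∧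
      w.darts.countP (fun d => decide (d.toProd.2 - d.toProd.1 = (a₂ : ZMod n) ∨
        d.toProd.1 - d.toProd.2 = (a₂ : ZMod n))) = 2 * (Nat.gcd n a₁ - 1) := by
  haveI : NeZero n := ⟨hn.ne'⟩
  set g := Nat.gcd n a₁ with hgdef
  set m := n / g with hmdef
  have hgpos : 0 < g := Nat.gcd_pos_of_pos_left _ hn
  have hgn : g ∣ n := Nat.gcd_dvd_left n a₁
  have hga : g ∣ a₁ := Nat.gcd_dvd_right n a₁
  have hnm : n = g * m := (Nat.mul_div_cancel' hgn).symm
  have hga1 : g ≤ a₁ := Nat.le_of_dvd (by omega) hga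
  have hm2 : 2 ≤ m := by
    rcases Nat.lt_or_ge m 2 with hc | hc
    · interval_cases m <;> omega
    · exact hc
  have hdvd : n ∣ m * a₁ := by
    refine ⟨a₁ / g, ?_⟩
    rw [hnm]
    conv_lhs => rw [← Nat.mul_div_cancel' hga]
    ring
  have hn4 : 4 ≤ n := by
    calc 4 = 2 * 2 := rfl
    _ ≤ g * m := Nat.mul_le_mul hg₁ hm2
    _ = n := hnm.symm
  -- cast facts
  have hA1 : (a₁ : ZMod n) ≠ 0 := by
    rw [Ne, ZMod.natCast_eq_zero_iff]
    intro hdv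
    have := Nat.le_of_dvd (by omega) hdv
    omega
  have hA2 : (a₂ : ZMod n) ≠ 0 := by
    rw [Ne, ZMod.natCast_eq_zero_iff]
    intro hdv
    have := Nat.le_of_dvd (by omega) hdv
    omega
  have hNE1 : (a₁ : ZMod n) ≠ (a₂ : ZMod n) := by
    rw [Ne, ZMod.natCast_eq_natCast_iff']
    rw [Nat.mod_eq_of_lt (by omega), Nat.mod_eq_of_lt (by omega)]
    exact hne
  have hNE2 : (a₁ : ZMod n) ≠ -(a₂ : ZMod n) := by
    intro hc
    have h0 : ((a₁ + a₂ : ℕ) : ZMod n) = 0 := by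
      push_cast
      rw [hc]
      ring
    rw [ZMod.natCast_eq_zero_iff] at h0
    have := Nat.le_of_dvd (by omega) h0
    omega
  -- the graph
  set S : Set (ZMod n) := {(a₁ : ZMod n), (a₂ : ZMod n)} with hS
  set G := SimpleGraph.circulantGraph S with hG
  have hAdj : ∀ (v c : ZMod n), c ∈ S → c ≠ 0 → G.Adj v (v + c) := by
    intro v c hc h0
    rw [hG, SimpleGraph.circulantGraph, SimpleGraph.fromRel_adj]
    constructor
    · intro hh
      exact h0 (by simpa using hh.symm)
    · right
      simpa using hc
  have hAdj1 : ∀ v : ZMod n, G.Adj v (v + (a₁ : ZMod n)) :=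
    fun v => hAdj v _ (Set.mem_insert _ _) hA1
  have hAdj2 : ∀ v : ZMod n, G.Adj v (v + (a₂ : ZMod n)) :=
    fun v => hAdj v _ (Set.mem_insert_of_mem _ rfl) hA2
  -- the predicate
  set P : ZMod n × ZMod n → Bool := fun q =>
    decide (q.2 - q.1 = (a₂ : ZMod n) ∨ q.1 - q.2 = (a₂ : ZMod n)) with hP
  have hPa2 : ∀ v : ZMod n, P (v, v + (a₂ : ZMod n)) = true := by
    intro v
    simp [hP]
  have hPa2' : ∀ v : ZMod n, P (v + (a₂ : ZMod n), v) = true := by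
    intro v
    simp [hP]
  have hPa1 : ∀ v : ZMod n, P (v, v + (a₁ : ZMod n)) = false := by
    intro v
    simp only [hP, decide_eq_false_iff_not]
    rintro (h | h)
    · exact hNE1 (by simpa using h)
    · apply hNE2
      have h2 : -(a₁ : ZMod n) = (a₂ : ZMod n) := by
        rw [← h]
        ring
      rw [← h2, neg_neg]
  have hPa1' : ∀ v : ZMod n, P (v + (a₁ : ZMod n), v) = false := by
    intro v
    simp only [hP, decide_eq_false_iff_not]
    rintro (h | h)
    · apply hNE2
      have h2 : -(a₁ : ZMod n) = (a₂ : ZMod n) := by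
        rw [← h]
        ring
      rw [← h2, neg_neg]
    · exact hNE1 (by simpa using h)
  have hPsymm : ∀ x y : ZMod n, P (x, y) = P (y, x) := by
    intro x y
    simp only [hP]
    exact decide_eq_decide.mpr or_comm
  -- step helper
  have hstepS : ∀ j k : ℕ, phi n a₁ a₂ (j, (k + 1) % m)
      = phi n a₁ a₂ (j, k % m) + (a₁ : ZMod n) := by
    intro j k
    rw [phi_mod hdvd, phi_mod hdvd, phi_step1]
  -- the chain
  have hchain : ∀ j : ℕ, List.Chain' G.Adj ((LL m j).map (phi n a₁ a₂)) := by
    intro j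
    induction j with
    | zero =>
      show List.Chain' G.Adj
        (((List.range m).map fun i => ((0 : ℕ), (i + 1) % m)).map (phi n a₁ a₂))
      rw [List.map_map]
      apply chain'_map_range
      intro i hi
      show G.Adj (phi n a₁ a₂ (0, (i + 1) % m)) (phi n a₁ a₂ (0, (i + 1 + 1) % m))
      rw [hstepS 0 (i + 1)]
      exact hAdj1 _
    | succ j ih =>
      show List.Chain' G.Adj
        (((((List.range (m - 1)).map (fun i => (j + 1, (j + 2 + i) % m)))
          ++ (LL m j).reverse ++ [(j + 1, (j + 1) % m)]).map (phi n a₁ a₂)))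
      simp only [List.map_append, List.map_reverse, List.map_cons, List.map_nil]
      rw [List.append_assoc, List.Chain', List.isChain_append]
      refine ⟨?_, ?_, ?_⟩
      · rw [List.map_map]
        apply chain'_map_range
        intro i hi
        show G.Adj (phi n a₁ a₂ (j + 1, (j + 2 + i) % m))
          (phi n a₁ a₂ (j + 1, (j + 2 + i + 1) % m))
        rw [hstepS (j + 1) (j + 2 + i)]
        exact hAdj1 _
      · rw [List.isChain_append]
        refine ⟨List.isChain_reverse.mpr (List.IsChain.imp (fun a b hab => hab.symm) ih),
          List.isChain_singleton _, ?_⟩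
        intro u hu v hv
        rw [List.getLast?_reverse, List.head?_map, LL_head? hm2] at hu
        simp only [Option.map_some, Option.mem_def, Option.some.injEq] at hu
        simp only [List.head?_cons, Option.mem_def, Option.some.injEq] at hv
        subst hu
        subst hv
        show G.Adj (phi n a₁ a₂ (j, (j + 1) % m)) (phi n a₁ a₂ (j + 1, (j + 1) % m))
        rw [phi_step2]
        exact hAdj2 _
      · intro u hu v hv
        rw [List.map_map, getLast?_map_range _ (m - 1) (by omega)] at hu
        simp only [Option.mem_def, Option.some.injEq] at hu
        rw [List.head?_append, List.head?_reverse, List.getLast?_map,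
          LL_getLast? hm2] at hv
        simp only [Option.map_some, Option.or_some, Option.or, Option.mem_def,
          Option.some.injEq] at hv
        subst hu
        subst hv
        show G.Adj (phi n a₁ a₂ (j + 1, (j + 2 + (m - 1 - 1)) % m))
          (phi n a₁ a₂ (j, j % m))
        have e1 : j + 2 + (m - 1 - 1) = j + m := by omega
        rw [e1, Nat.add_mod_right, phi_step2]
        exact (hAdj2 _).symm
  -- the count
  have hcount : ∀ j : ℕ, (steps ((LL m j).map (phi n a₁ a₂))).countP P = 2 * j := by
    intro j
    induction j with
    | zero =>
      apply countP_steps_eq_zero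
      show List.Chain' _
        (((List.range m).map fun i => ((0 : ℕ), (i + 1) % m)).map (phi n a₁ a₂))
      rw [List.map_map]
      apply chain'_map_range
      intro i hi
      show ¬ P (phi n a₁ a₂ (0, (i + 1) % m), phi n a₁ a₂ (0, (i + 1 + 1) % m)) = true
      rw [hstepS 0 (i + 1), hPa1]
      simp
    | succ j ih =>
      show (steps (((((List.range (m - 1)).map (fun i => (j + 1, (j + 2 + i) % m)))
          ++ (LL m j).reverse ++ [(j + 1, (j + 1) % m)]).map (phi n a₁ a₂)))).countP P
        = 2 * (j + 1)
      simp only [List.map_append, List.map_reverse, List.map_cons, List.map_nil]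
      rw [List.append_assoc]
      have hlastA : (((List.range (m - 1)).map
          (fun i => (j + 1, (j + 2 + i) % m))).map (phi n a₁ a₂)).getLast?
          = some (phi n a₁ a₂ (j + 1, j % m)) := by
        rw [List.map_map, getLast?_map_range _ (m - 1) (by omega)]
        have e1 : j + 2 + (m - 1 - 1) = j + m := by omega
        show some (phi n a₁ a₂ (j + 1, (j + 2 + (m - 1 - 1)) % m)) = _
        rw [e1, Nat.add_mod_right]
      have hheadB : (((LL m j).map (phi n a₁ a₂)).reverse
          ++ [phi n a₁ a₂ (j + 1, (j + 1) % m)]).head?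
          = some (phi n a₁ a₂ (j, j % m)) := by
        rw [List.head?_append, List.head?_reverse, List.getLast?_map, LL_getLast? hm2]
        rfl
      have hlastB : (((LL m j).map (phi n a₁ a₂)).reverse).getLast?
          = some (phi n a₁ a₂ (j, (j + 1) % m)) := by
        rw [List.getLast?_reverse, List.head?_map, LL_head? hm2]
        rfl
      rw [countP_steps_append P _ _ hlastA hheadB,
        countP_steps_append P _ _ hlastB (by rfl : [phi n a₁ a₂ (j + 1, (j + 1) % m)].head? = some _)]
      have hcA : (steps (((List.range (m - 1)).map
          (fun i => (j + 1, (j + 2 + i) % m))).map (phi n a₁ a₂))).countP P = 0 := by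
        apply countP_steps_eq_zero
        rw [List.map_map]
        apply chain'_map_range
        intro i hi
        show ¬ P (phi n a₁ a₂ (j + 1, (j + 2 + i) % m),
          phi n a₁ a₂ (j + 1, (j + 2 + i + 1) % m)) = true
        rw [hstepS (j + 1) (j + 2 + i), hPa1]
        simp
      have hcB : (steps (((LL m j).map (phi n a₁ a₂)).reverse)).countP P = 2 * j := by
        rw [countP_steps_reverse P P hPsymm]
        exact ih
      have hif1 : P (phi n a₁ a₂ (j + 1, j % m), phi n a₁ a₂ (j, j % m)) = true := by
        rw [phi_step2]
        exact hPa2' _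
      have hif2 : P (phi n a₁ a₂ (j, (j + 1) % m),
          phi n a₁ a₂ (j + 1, (j + 1) % m)) = true := by
        rw [phi_step2]
        exact hPa2 _
      rw [hcA, hcB, hif1, hif2]
      simp [steps]
      omega
  -- nodup
  have hnodup : ((LL m (g - 1)).map (phi n a₁ a₂)).Nodup := by
    apply List.Nodup.map_on _ (LL_nodup hm2 _)
    intro x hx y hy hxy
    have hbx := LL_bounds hm2 _ x hx
    have hby := LL_bounds hm2 _ y hy
    have h := phi_inj hn (by omega) hg (show x.1 < Nat.gcd n a₁ by omega)
      (show y.1 < Nat.gcd n a₁ by omega)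
      (show x.2 < n / Nat.gcd n a₁ from hbx.2) (show y.2 < n / Nat.gcd n a₁ from hby.2)
      (by rw [show x = (x.1, x.2) from rfl, show y = (y.1, y.2) from rfl] at hxy; exact hxy)
    exact Prod.ext h.1 h.2
  -- assemble
  set l := (LL m (g - 1)).map (phi n a₁ a₂) with hl
  have hlen : l.length = n := by
    rw [hl, List.length_map, LL_length hm2, show g - 1 + 1 = g by omega, ← hnm]
  have hhead : l.head? = some (phi n a₁ a₂ (g - 1, g % m)) := by
    rw [hl, List.head?_map, LL_head? hm2, show g - 1 + 1 = g by omega]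
    rfl
  have hlast : l.getLast? = some (phi n a₁ a₂ (g - 1, (g - 1) % m)) := by
    rw [hl, List.getLast?_map, LL_getLast? hm2]
    rfl
  obtain ⟨x, a, t, hxt⟩ : ∃ x a t, l = x :: a :: t := by
    rcases l with _ | ⟨x, _ | ⟨a, t⟩⟩
    · simp at hlen; omega
    · simp at hlen; omega
    · exact ⟨x, a, t, rfl⟩
  have ht : t ≠ [] := by
    intro h
    rw [hxt, h] at hlen
    simp at hlen
    omega
  have hx_eq : x = phi n a₁ a₂ (g - 1, g % m) := by
    rw [hxt] at hhead
    simpa using hhead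
  have hclose : x = phi n a₁ a₂ (g - 1, (g - 1) % m) + (a₁ : ZMod n) := by
    rw [hx_eq, show g % m = ((g - 1) + 1) % m by rw [show g - 1 + 1 = g by omega]]
    exact hstepS _ _
  have hch : List.Chain G.Adj x ((a :: t) ++ [x]) := by
    have h1 : List.Chain' G.Adj (l ++ [x]) := by
      rw [List.Chain', List.isChain_append]
      refine ⟨hchain _, List.isChain_singleton _, ?_⟩
      intro u hu v hv
      rw [hlast] at hu
      simp only [Option.mem_def, Option.some.injEq] at hu
      simp only [List.head?_cons, Option.mem_def, Option.some.injEq] at hv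
      subst hu
      subst hv
      rw [hclose]
      exact hAdj1 _
    rw [hxt] at h1
    exact h1
  have hnd : (x :: a :: t).Nodup := hxt ▸ hnodup
  have hcard : (x :: a :: t).length = Fintype.card (ZMod n) := by
    rw [← hxt, hlen, ZMod.card]
  obtain ⟨w, hw, hdarts⟩ := ham_of_list x a t hnd hcard ht hch
  refine ⟨x, w, hw, ?_⟩
  have e1 : w.darts.countP (fun d => decide (d.toProd.2 - d.toProd.1 = (a₂ : ZMod n) ∨
      d.toProd.1 - d.toProd.2 = (a₂ : ZMod n)))
      = ((x :: a :: t).zip ((a :: t) ++ [x])).countP P := by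
    rw [← hdarts, List.countP_map]
    rfl
  rw [e1]
  have e2 := zip_tail_concat (x :: a :: t) x (by simp)
  simp only [List.tail_cons] at e2
  rw [e2, List.countP_append]
  have hc1 : (steps (x :: a :: t)).countP P = 2 * (g - 1) := by
    rw [← hxt]
    exact hcount (g - 1)
  have hlast_eq : (a :: t).getLast (by simp) = phi n a₁ a₂ (g - 1, (g - 1) % m) := by
    have h2 : (a :: t).getLast? = some (phi n a₁ a₂ (g - 1, (g - 1) % m)) := by
      rw [show (a :: t).getLast? = l.getLast? from by rw [hxt, List.getLast?_cons_cons]]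
      exact hlast
    rw [List.getLast?_eq_getLast (l := a :: t) (by simp)] at h2
    simpa using h2
  have hc2 : P ((a :: t).getLast (by simp), x) = false := by
    rw [hlast_eq, hclose]
    exact hPa1 _
  rw [hc1]
  simp only [List.countP_append, List.countP_cons, List.countP_nil]
  simp
  exact hc2
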